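/- Let q be an odd prime and a a nonsquare in F_q. Under the group operation t1 * t2 = (t1·t2 + a)/(t1+t2) on T = F_q ∪ {∞} (identity ∞), every element t of F_q satisfies t^{*(q+1)} = ∞, i.e., the (q+1)-fold product of t with itself is the identity. -/

import Mathlib

/-- The operation on `T = F_q ∪ {∞}` (with `∞ = none`) given by
`t₁ * t₂ = (t₁t₂ + a)/(t₁ + t₂)` when `t₁ + t₂ ≠ 0`, `∞` when `t₁ + t₂ = 0`,
and with `∞` as identity. -/
def Tmul {q : ℕ} [Fact q.Prime] (a : ZMod q) :
    Option (ZMod q) → Option (ZMod q) → Option (ZMod q)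
  | none, t => t
  | some t, none => some t
  | some t1, some t2 => if t1 + t2 = 0 then none else some ((t1 * t2 + a) / (t1 + t2))

/-- `Tpow a t k` is the `k`-fold product `t * t * ⋯ * t` in `(T, Tmul a)`,
with `Tpow a t 0 = ∞` the identity. -/
def Tpow {q : ℕ} [Fact q.Prime] (a : ZMod q) (t : Option (ZMod q)) : ℕ → Option (ZMod q)
  | 0 => none
  | k + 1 => Tmul a t (Tpow a t k)

namespace TpowAux

/-- The ring `F_q[X]/(X² - a)`, realized on pairs. -/
@[ext] structure Fq2 (q : ℕ) (a : ZMod q) where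
  re : ZMod q
  im : ZMod q

namespace Fq2

variable {q : ℕ} [Fact q.Prime] {a : ZMod q}

instance : Zero (Fq2 q a) := ⟨⟨0, 0⟩⟩
instance : One (Fq2 q a) := ⟨⟨1, 0⟩⟩
instance : Add (Fq2 q a) := ⟨fun x y => ⟨x.re + y.re, x.im + y.im⟩⟩
instance : Neg (Fq2 q a) := ⟨fun x => ⟨-x.re, -x.im⟩⟩
instance : Mul (Fq2 q a) := ⟨fun x y => ⟨x.re * y.re + a * x.im * y.im, x.re * y.im + x.im * y.re⟩⟩

@[simp] lemma zero_re : (0 : Fq2 q a).re = 0 := rfl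
@[simp] lemma zero_im : (0 : Fq2 q a).im = 0 := rfl
@[simp] lemma one_re : (1 : Fq2 q a).re = 1 := rfl
@[simp] lemma one_im : (1 : Fq2 q a).im = 0 := rfl
@[simp] lemma add_re (x y : Fq2 q a) : (x + y).re = x.re + y.re := rfl
@[simp] lemma add_im (x y : Fq2 q a) : (x + y).im = x.im + y.im := rfl
@[simp] lemma neg_re (x : Fq2 q a) : (-x).re = -x.re := rfl
@[simp] lemma neg_im (x : Fq2 q a) : (-x).im = -x.im := rfl
@[simp] lemma mul_re (x y : Fq2 q a) : (x * y).re = x.re * y.re + a * x.im * y.im := rfl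
@[simp] lemma mul_im (x y : Fq2 q a) : (x * y).im = x.re * y.im + x.im * y.re := rfl

instance : CommRing (Fq2 q a) where
  add_assoc x y z := by ext <;> simp <;> ring
  zero_add x := by ext <;> simp
  add_zero x := by ext <;> simp
  add_comm x y := by ext <;> simp <;> ring
  mul_assoc x y z := by ext <;> simp <;> ring
  one_mul x := by ext <;> simp
  mul_one x := by ext <;> simp
  left_distrib x y z := by ext <;> simp <;> ring
  right_distrib x y z := by ext <;> simp <;> ring
  zero_mul x := by ext <;> simp
  mul_zero x := by ext <;> simp
  mul_comm x y := by ext <;> simp <;> ring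
  neg_add_cancel x := by ext <;> simp
  nsmul := nsmulRec
  zsmul := zsmulRec

/-- The canonical embedding `F_q → F_q[√a]`. -/
def ofZ (a : ZMod q) : ZMod q →+* Fq2 q a where
  toFun x := ⟨x, 0⟩
  map_one' := rfl
  map_mul' x y := by ext <;> simp
  map_zero' := rfl
  map_add' x y := by ext <;> simp

@[simp] lemma ofZ_re (x : ZMod q) : (ofZ a x).re = x := rfl
@[simp] lemma ofZ_im (x : ZMod q) : (ofZ a x).im = 0 := rfl

lemma ofZ_injective : Function.Injective (ofZ a) := fun x y h => congrArg re h

instance : CharP (Fq2 q a) q := charP_of_injective_ringHom ofZ_injective q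

/-- The square root of `a`. -/
def rt (q : ℕ) [Fact q.Prime] (a : ZMod q) : Fq2 q a := ⟨0, 1⟩

@[simp] lemma rt_re : (rt q a).re = 0 := rfl
@[simp] lemma rt_im : (rt q a).im = 1 := rfl

lemma rt_sq : (rt q a) ^ 2 = ofZ a a := by ext <;> simp [pow_two]

/-- The norm form. -/
def nrm (a : ZMod q) (x : Fq2 q a) : ZMod q := x.re ^ 2 - a * x.im ^ 2

lemma nrm_mul (x y : Fq2 q a) : nrm a (x * y) = nrm a x * nrm a y := by
  simp only [nrm, mul_re, mul_im]; ring

lemma nrm_pow (x : Fq2 q a) (k : ℕ) : nrm a (x ^ k) = (nrm a x) ^ k := by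
  induction k with
  | zero => simp [nrm]
  | succ n ih => rw [pow_succ, pow_succ, nrm_mul, ih]

end Fq2

end TpowAux

open TpowAux TpowAux.Fq2 in
/-- For `q` an odd prime and `a` a nonsquare in `F_q`, every element `t ∈ F_q` of the
group `T = F_q ∪ {∞}` satisfies `t^{*(q+1)} = ∞`. -/
theorem Tpow_card_add_one (q : ℕ) [Fact q.Prime] (hq : Odd q)
    (a : ZMod q) (ha : ¬ IsSquare a) (t : ZMod q) :
    Tpow a (some t) (q + 1) = none := by
  have hq1 : (1 : ZMod q) ≠ 0 := one_ne_zero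
  have ha0 : a ≠ 0 := fun h => ha (h ▸ ⟨0, by simp⟩)
  have hN : t ^ 2 - a ≠ 0 := by
    intro h
    exact ha ⟨t, by rw [← pow_two]; linear_combination -h⟩
  -- the element t + √a
  set z : Fq2 q a := ⟨t, 1⟩ with hz
  have hnz : nrm a z = t ^ 2 - a := by simp [nrm, hz]
  -- correspondence between Tpow and powers of z
  have key : ∀ k : ℕ, 1 ≤ k →
      Tpow a (some t) k =
        if (z ^ k).im = 0 then none else some ((z ^ k).re / (z ^ k).im) := by
    intro k hk
    induction k, hk using Nat.le_induction with
    | base =>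
      simp [Tpow, Tmul, hz, pow_one, hq1]
    | succ k hk ih =>
      have hPnrm : nrm a (z ^ k) ≠ 0 := by
        rw [nrm_pow, hnz]; exact pow_ne_zero _ hN
      set P : Fq2 q a := z ^ k with hP
      have hre : (z ^ (k + 1)).re = P.re * t + a * P.im := by
        rw [pow_succ, ← hP]; simp [hz]
      have him : (z ^ (k + 1)).im = P.re + P.im * t := by
        rw [pow_succ, ← hP]; simp [hz]
      rw [Tpow, ih]
      by_cases h : P.im = 0
      · have hre0 : P.re ≠ 0 := by
          intro h0; apply hPnrm; simp [nrm, h, h0]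
        rw [if_pos h]
        have : (z ^ (k + 1)).im ≠ 0 := by rw [him, h]; simpa using hre0
        rw [if_neg this, Tmul]
        congr 1
        rw [hre, him, h]
        field_simp
        rw [mul_zero, mul_zero, add_zero, add_zero, mul_div_assoc, div_self hre0, mul_one]
      · rw [if_neg h, Tmul]
        by_cases hts : t + P.re / P.im = 0
        · rw [if_pos hts]
          have : (z ^ (k + 1)).im = 0 := by
            rw [him]
            field_simp at hts
            linear_combination hts
          rw [if_pos this]
        · rw [if_neg hts]
          have him0 : (z ^ (k + 1)).im ≠ 0 := by
            rw [him]
            intro h0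
            apply hts
            field_simp
            linear_combination h0
          rw [if_neg him0]
          congr 1
          rw [hre, him]
          field_simp
          ring
  -- (t + √a)^q = t - √a via Frobenius and Euler's criterion
  have heuler : a ^ (q / 2) = -1 := by
    have h1 : a ^ (q / 2) * a ^ (q / 2) = 1 := by
      rw [← pow_add]
      have : q / 2 + q / 2 = q - 1 := by
        obtain ⟨m, hm⟩ := hq; omega
      rw [this]
      exact ZMod.pow_card_sub_one_eq_one ha0
    rcases mul_self_eq_one_iff.mp h1 with h | h
    · exact absurd ((ZMod.euler_criterion q ha0).mpr h) ha
    · exact h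
  have hzq : z ^ q = ⟨t, -1⟩ := by
    have hsplit : z = ofZ a t + rt q a := by ext <;> simp [hz, rt]
    have hr : (rt q a) ^ q = -(rt q a) := by
      have hq2 : q = 2 * (q / 2) + 1 := by obtain ⟨m, hm⟩ := hq; omega
      calc (rt q a) ^ q = ((rt q a) ^ 2) ^ (q / 2) * rt q a := by
            rw [← pow_mul, ← pow_succ, ← hq2]
        _ = -(rt q a) := by
            rw [rt_sq, ← map_pow, heuler]
            ext <;> simp [rt]
    rw [hsplit, add_pow_char, ← map_pow, ZMod.pow_card, hr]
    ext <;> simp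
  have hfin : (z ^ (q + 1)).im = 0 := by
    rw [pow_succ, hzq]
    simp [hz]
  rw [key (q + 1) (by omega), if_pos hfin]
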